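/- There exists a constant K > 0 such that for all s, s' ∈ 𝓕, ∏_{j ∈ supp(s) ∪ supp(s')} ( Σ_{y : He_{s_j+1}(y) = 0} |H_{s'_j}(y)| ) ≤ e^{K |s|₁}, where the inner sum runs over the s_j + 1 distinct real roots y of He_{s_j+1} and H_n = He_n/√(n!) is the normalized Hermite polynomial. (This product equals the sum Σ_{k∈π_s} |H_{s'}(y_{s;k})| of the absolute values of the tensorized normalized Hermite polynomial H_{s'} over the sparse grid π_s of tensorized Hermite roots.) -/

import Mathlib

open Polynomial MeasureTheory Real Set Filter

namespace Stmt8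

theorem derivative_hermite (n : ℕ) :
    derivative (hermite n) = (n : ℤ[X]) * hermite (n - 1) := by
  induction n with
  | zero => simp [hermite_zero]
  | succ k ih =>
    rw [hermite_succ, derivative_sub, derivative_mul, derivative_X, one_mul, ih]
    cases k with
    | zero => simp [hermite_zero, hermite_one]
    | succ m =>
      rw [derivative_mul, derivative_natCast, zero_mul, zero_add,
        show m + 1 - 1 = m from rfl, show m + 1 + 1 - 1 = m + 1 from rfl]
      calc hermite (m+1) + X * ((↑(m+1) : ℤ[X]) * hermite m) - (↑(m+1) : ℤ[X]) * derivative (hermite m)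
          = hermite (m+1) + (↑(m+1) : ℤ[X]) * (X * hermite m - derivative (hermite m)) := by ring
        _ = hermite (m+1) + (↑(m+1) : ℤ[X]) * hermite (m+1) := by rw [← hermite_succ]
        _ = (↑(m+1+1) : ℤ[X]) * hermite (m+1) := by push_cast; ring

theorem aeval_hermite_succ (n : ℕ) (y : ℝ) :
    aeval y (hermite (n + 1)) =
      y * aeval y (hermite n) - n * aeval y (hermite (n - 1)) := by
  rw [hermite_succ, map_sub, map_mul, aeval_X, derivative_hermite, map_mul]
  simp

theorem aeval_hermite_neg (n : ℕ) (y : ℝ) :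
    aeval (-y) (hermite n) = (-1 : ℝ) ^ n * aeval y (hermite n) := by
  rw [aeval_eq_sum_range (p := hermite n) (-y), aeval_eq_sum_range (p := hermite n) y,
    Finset.mul_sum]
  refine Finset.sum_congr rfl fun k _ => ?_
  rcases Nat.even_or_odd (n + k) with h | h
  · have hk : (-1 : ℝ) ^ k = (-1 : ℝ) ^ n := by
      have hiff := Nat.even_add.mp h
      rcases Nat.even_or_odd n with h1 | h1
      · rw [Even.neg_one_pow (hiff.mp h1), Even.neg_one_pow h1]
      · have h2 : Odd k := by
          rcases Nat.even_or_odd k with h3 | h3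
          · exact absurd (hiff.mpr h3) (Nat.not_even_iff_odd.mpr h1)
          · exact h3
        rw [Odd.neg_one_pow h2, Odd.neg_one_pow h1]
    rw [neg_pow, zsmul_eq_mul, zsmul_eq_mul, hk]
    ring
  · rw [coeff_hermite_of_odd_add h]
    simp


theorem hermite_pos_of_large {n : ℕ} (hn : 1 ≤ n) {y : ℝ} (hy : 2 * Real.sqrt n ≤ y) :
    ∀ k, 1 ≤ k → k ≤ n →
      Real.sqrt k * aeval y (hermite (k - 1)) ≤ aeval y (hermite k) ∧
      0 < aeval y (hermite k) := by
  have hsn : (1 : ℝ) ≤ Real.sqrt n := by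
    rw [show (1:ℝ) = Real.sqrt 1 by simp]
    exact Real.sqrt_le_sqrt (by exact_mod_cast hn)
  have hy2 : (2 : ℝ) ≤ y := le_trans (by nlinarith) hy
  intro k hk
  induction k, hk using Nat.le_induction with
  | base =>
    intro _
    simp only [hermite_one, hermite_zero, map_X, aeval_X, Nat.sub_self]
    constructor
    · simpa using le_trans (by norm_num) hy2
    · linarith
  | succ k hk1 ih =>
    intro hkn
    obtain ⟨h1, h2⟩ := ih (le_trans (Nat.le_succ k) hkn)
    have hsq : Real.sqrt k * (Real.sqrt k * aeval y (hermite (k-1))) ≤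
        Real.sqrt k * aeval y (hermite k) :=
      mul_le_mul_of_nonneg_left h1 (Real.sqrt_nonneg _)
    have hss : Real.sqrt k * Real.sqrt k = (k : ℝ) := Real.mul_self_sqrt (by positivity)
    have hk' := hsq
    rw [← mul_assoc, hss] at hk'
    have hyk : Real.sqrt k + Real.sqrt (k+1) ≤ y := by
      have a1 : Real.sqrt k ≤ Real.sqrt n := Real.sqrt_le_sqrt (by exact_mod_cast le_trans (Nat.le_succ k) hkn)
      have a2 : Real.sqrt (k+1) ≤ Real.sqrt n := Real.sqrt_le_sqrt (by exact_mod_cast hkn)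
      linarith
    have key : Real.sqrt (k+1) * aeval y (hermite k) ≤ aeval y (hermite (k+1)) := by
      rw [aeval_hermite_succ]
      nlinarith [h2, hyk, hk']
    refine ⟨by simpa using key, lt_of_lt_of_le ?_ key⟩
    have : (0:ℝ) < Real.sqrt (k+1) := Real.sqrt_pos.mpr (by positivity)
    positivity

theorem sq_le_of_root {n : ℕ} (hn : 1 ≤ n) {y : ℝ} (hroot : aeval y (hermite n) = 0) :
    y ^ 2 ≤ 4 * n := by
  by_contra h
  push_neg at h
  have h2 : 2 * Real.sqrt n < |y| := by
    have h3 : Real.sqrt (4*n) < Real.sqrt (y^2) := Real.sqrt_lt_sqrt (by positivity) h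
    rw [Real.sqrt_sq_eq_abs, show (4:ℝ)*n = (2*Real.sqrt n)^2 by
      rw [mul_pow]; rw [Real.sq_sqrt (by positivity)]; ring,
      Real.sqrt_sq (by positivity)] at h3
    exact h3
  rcases le_or_gt 0 y with hy | hy
  · exact ((hermite_pos_of_large hn (le_of_lt (by rwa [abs_of_nonneg hy] at h2)) n hn
      le_rfl).2.ne' hroot)
  · have hp := (hermite_pos_of_large hn (le_of_lt (by rwa [abs_of_neg hy] at h2)) n hn le_rfl).2
    rw [aeval_hermite_neg, hroot, mul_zero] at hp
    exact lt_irrefl _ hp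


noncomputable def Fc (n : ℕ) (y : ℝ) (t : ℝ) : ℂ :=
  (t:ℂ)^n * Complex.exp (Complex.I * y * t) * Complex.exp (-(1/2 : ℂ) * t^2)

theorem norm_Fc (n : ℕ) (y t : ℝ) :
    ‖Fc n y t‖ = |t|^n * Real.exp (-(1/2)*t^2) := by
  rw [Fc, norm_mul, norm_mul, norm_pow,
    Complex.norm_exp, Complex.norm_exp, Complex.norm_real, Real.norm_eq_abs]
  have e1 : (Complex.I * (y:ℂ) * (t:ℂ)).re = 0 := by simp
  have e2 : ((-(1/2:ℂ)) * (t:ℂ)^2).re = -(1/2)*t^2 := by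
    rw [show (-(1/2:ℂ))*(t:ℂ)^2 = ((-(1/2)*t^2 : ℝ) : ℂ) by push_cast; ring,
      Complex.ofReal_re]
  rw [e1, e2, Real.exp_zero, mul_one]

theorem integrable_pow_gauss (n : ℕ) :
    Integrable (fun t : ℝ => t^n * Real.exp (-(1/2)*t^2)) := by
  have := integrable_rpow_mul_exp_neg_mul_sq (b := 1/2) (by norm_num) (s := (n : ℝ))
    (lt_of_lt_of_le (by norm_num) (Nat.cast_nonneg n))
  simpa [Real.rpow_natCast] using this

theorem integrable_abs_pow_gauss (n : ℕ) :
    Integrable (fun t : ℝ => |t|^n * Real.exp (-(1/2)*t^2)) := by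
  have h := (integrable_pow_gauss n).abs
  refine h.congr (Eventually.of_forall fun t => ?_)
  show |t ^ n * rexp (-(1/2)*t^2)| = |t|^n * rexp (-(1/2)*t^2)
  rw [abs_mul, abs_pow, Real.abs_exp]

theorem integrable_Fc (n : ℕ) (y : ℝ) : Integrable (Fc n y) := by
  refine Integrable.mono' (integrable_abs_pow_gauss n) ?_ (Eventually.of_forall fun t => ?_)
  · apply Continuous.aestronglyMeasurable
    unfold Fc
    continuity
  · rw [norm_Fc]

theorem tendsto_pow_gauss_atTop (n : ℕ) :
    Tendsto (fun t : ℝ => t^n * Real.exp (-(1/2)*t^2)) atTop (nhds 0) := by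
  have h1 : Tendsto (fun x : ℝ => Real.exp (-(1/2) * x)) atTop (nhds 0) := by
    have h2 : Tendsto (fun x : ℝ => (1/2) * x) atTop atTop :=
      Tendsto.const_mul_atTop (by norm_num) tendsto_id
    have h3 := Real.tendsto_exp_neg_atTop_nhds_zero.comp h2
    refine h3.congr fun x => ?_
    simp only [Function.comp]
    ring_nf
  have h0 := (rpow_mul_exp_neg_mul_sq_isLittleO_exp_neg (b := 1/2) (by norm_num)
    (n : ℝ)).trans_tendsto h1
  refine h0.congr fun x => ?_
  rw [Real.rpow_natCast]

theorem tendsto_abs_pow_gauss (n : ℕ) (l : Filter ℝ) (hl : Tendsto abs l atTop) :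
    Tendsto (fun t : ℝ => |t|^n * Real.exp (-(1/2)*t^2)) l (nhds 0) := by
  have h := (tendsto_pow_gauss_atTop n).comp hl
  refine h.congr fun x => ?_
  simp [Function.comp, sq_abs]

theorem tendsto_Fc (n : ℕ) (y : ℝ) (l : Filter ℝ) (hl : Tendsto abs l atTop) :
    Tendsto (Fc n y) l (nhds 0) :=
  squeeze_zero_norm (fun t => (norm_Fc n y t).le) (tendsto_abs_pow_gauss n l hl)

theorem hasDerivAt_Fc (n : ℕ) (y : ℝ) (t : ℝ) :
    HasDerivAt (Fc n y)
      ((n:ℂ) * Fc (n-1) y t + Complex.I * y * Fc n y t - Fc (n+1) y t) t := by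
  have hid : HasDerivAt (fun z : ℂ => z) 1 (t:ℂ) := hasDerivAt_id _
  have h2 : HasDerivAt (fun z : ℂ => z^n) ((n:ℂ) * (t:ℂ)^(n-1)) (t:ℂ) := by
    simpa using hasDerivAt_pow n (t:ℂ)
  have h3 : HasDerivAt (fun z : ℂ => Complex.exp (Complex.I*y*z))
      (Complex.exp (Complex.I*y*(t:ℂ)) * (Complex.I*y)) (t:ℂ) := by
    simpa using ((hid.const_mul (Complex.I*(y:ℂ))).cexp)
  have h4 : HasDerivAt (fun z : ℂ => Complex.exp (-(1/2:ℂ)*z^2))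
      (Complex.exp (-(1/2:ℂ)*(t:ℂ)^2) * (-(t:ℂ))) (t:ℂ) := by
    have h5 := ((hasDerivAt_pow 2 (t:ℂ)).const_mul (-(1/2:ℂ))).cexp
    exact h5.congr_deriv (by simp)
  have h6 := ((h2.mul h3).mul h4).comp_ofReal
  convert h6 using 1
  · rfl
  unfold Fc
  cases n with
  | zero => simp; ring
  | succ m =>
    simp only [Pi.mul_apply]
    push_cast
    ring

theorem integral_deriv_zero {F F' : ℝ → ℂ} (hd : ∀ t, HasDerivAt F (F' t) t)
    (hi : Integrable F') (ht : Tendsto F atTop (nhds 0))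
    (hb : Tendsto F atBot (nhds 0)) : ∫ t, F' t = 0 := by
  have h1 : ∫ t in Ioi (0:ℝ), F' t = 0 - F 0 :=
    integral_Ioi_of_hasDerivAt_of_tendsto' (fun x _ => hd x) hi.integrableOn ht
  have h2 : ∫ t in Iic (0:ℝ), F' t = F 0 - 0 :=
    integral_Iic_of_hasDerivAt_of_tendsto' (fun x _ => hd x) hi.integrableOn hb
  rw [← intervalIntegral.integral_Iic_add_Ioi hi.integrableOn hi.integrableOn, h1, h2]
  ring

theorem Rn_rec (n : ℕ) (y : ℝ) :
    ∫ t, Fc (n+1) y t =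
      Complex.I * y * (∫ t, Fc n y t) + (n:ℂ) * ∫ t, Fc (n-1) y t := by
  have hi : Integrable (fun t => (n:ℂ) * Fc (n-1) y t + Complex.I * y * Fc n y t
      - Fc (n+1) y t) :=
    (((integrable_Fc (n-1) y).const_mul _).add ((integrable_Fc n y).const_mul _)).sub
      (integrable_Fc (n+1) y)
  have hiA : Integrable (fun t => (n:ℂ) * Fc (n-1) y t) := (integrable_Fc (n-1) y).const_mul _
  have hiB : Integrable (fun t => Complex.I * (y:ℂ) * Fc n y t) := (integrable_Fc n y).const_mul _
  have hiAB : Integrable (fun t => (n:ℂ) * Fc (n-1) y t + Complex.I * (y:ℂ) * Fc n y t) :=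
    hiA.add hiB
  have h0 := integral_deriv_zero (hasDerivAt_Fc n y) hi
    (tendsto_Fc n y atTop tendsto_abs_atTop_atTop)
    (tendsto_Fc n y atBot tendsto_abs_atBot_atTop)
  rw [integral_sub hiAB (integrable_Fc (n+1) y), integral_add hiA hiB,
    integral_const_mul, integral_const_mul] at h0
  linear_combination -h0

theorem Rn_closed_zero (y : ℝ) :
    ∫ t, Fc 0 y t =
      ((Real.sqrt (2*Real.pi) * Real.exp (-(1/2)*y^2) : ℝ) : ℂ) := by
  have h := fourierIntegral_gaussian (b := (1/2:ℂ)) (by norm_num) (y:ℂ)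
  have e0 : ∀ t : ℝ, Fc 0 y t = Complex.exp (Complex.I * y * t)
      * Complex.exp (-(1/2:ℂ) * t^2) := by
    intro t; rw [Fc]; simp
  rw [MeasureTheory.integral_congr_ae (Eventually.of_forall e0), h]
  rw [show ((Real.pi : ℂ) / (1/2:ℂ)) = (((2*Real.pi : ℝ)) : ℂ) by push_cast; ring]
  rw [show -((y:ℂ))^2/(4*(1/2:ℂ)) = (((-(1/2)*y^2 : ℝ)) : ℂ) by push_cast; ring]
  rw [show (1/2 : ℂ) = ((1/2:ℝ):ℂ) by norm_num]
  rw [← Complex.ofReal_cpow (by positivity) _]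
  rw [← Real.sqrt_eq_rpow, ← Complex.ofReal_exp]
  push_cast
  ring

theorem Rn_closed (y : ℝ) (n : ℕ) :
    ∫ t, Fc n y t = Complex.I ^ n *
      ((Real.sqrt (2*Real.pi) * aeval y (hermite n) * Real.exp (-(1/2)*y^2) : ℝ) : ℂ) := by
  induction n using Nat.twoStepInduction with
  | zero =>
    have ha : aeval y (hermite 0) = (1:ℝ) := by simp [hermite_zero]
    rw [Rn_closed_zero y, ha]
    push_cast
    ring
  | one =>
    have ha : aeval y (hermite 1) = y := by simp [hermite_one]
    rw [Rn_rec 0 y, Rn_closed_zero y, ha]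
    push_cast
    ring
  | more n ih1 ih2 =>
    rw [Rn_rec (n+1) y, Nat.add_sub_cancel, ih2, ih1]
    have hs := aeval_hermite_succ (n+1) y
    rw [Nat.add_sub_cancel] at hs
    rw [hs]
    push_cast [Complex.ofReal_exp]
    linear_combination ((((n:ℂ))+1) * Complex.I^n
      * ((Real.sqrt (2*Real.pi) : ℝ) : ℂ) * ((aeval y (hermite n) : ℝ) : ℂ)
      * Complex.exp (-(1/2 : ℂ) * (y:ℂ)^2)) * Complex.I_sq

noncomputable def mI (n : ℕ) : ℝ := ∫ t in Ioi (0:ℝ), t^n * Real.exp (-(1/2)*t^2)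

theorem hasDerivAt_pow_gauss (k : ℕ) (x : ℝ) :
    HasDerivAt (fun t : ℝ => t^k * Real.exp (-(1/2)*t^2))
      ((k:ℝ)*x^(k-1) * Real.exp (-(1/2)*x^2) - x^(k+1) * Real.exp (-(1/2)*x^2)) x := by
  have h1 : HasDerivAt (fun t : ℝ => -(1/2)*t^2) (-(1/2)*(2*x^1)) x :=
    (hasDerivAt_pow 2 x).const_mul (-(1/2))
  have h2 := h1.exp
  have h3 := (hasDerivAt_pow k x).mul h2
  refine h3.congr_deriv ?_
  ring

theorem mI_one : mI 1 = 1 := by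
  have hd : ∀ x ∈ Ici (0:ℝ), HasDerivAt (fun t : ℝ => -(t^0 * Real.exp (-(1/2)*t^2)))
      (x^1 * Real.exp (-(1/2)*x^2)) x := by
    intro x _
    have := (hasDerivAt_pow_gauss 0 x).neg
    refine this.congr_deriv ?_
    simp
  have hint : IntegrableOn (fun x : ℝ => x^1 * Real.exp (-(1/2)*x^2)) (Ioi 0) :=
    (integrable_pow_gauss 1).integrableOn
  have htend : Tendsto (fun t : ℝ => -(t^0 * Real.exp (-(1/2)*t^2))) atTop (nhds 0) := by
    simpa using (tendsto_pow_gauss_atTop 0).neg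
  have h := integral_Ioi_of_hasDerivAt_of_tendsto' hd hint htend
  rw [mI, h]
  norm_num

theorem mI_rec (n : ℕ) : mI (n+2) = (n+1) * mI n := by
  have hd : ∀ x ∈ Ici (0:ℝ), HasDerivAt (fun t : ℝ => t^(n+1) * Real.exp (-(1/2)*t^2))
      (((n+1:ℝ))*x^n * Real.exp (-(1/2)*x^2) - x^(n+2) * Real.exp (-(1/2)*x^2)) x := by
    intro x _
    have h := hasDerivAt_pow_gauss (n+1) x
    rw [Nat.add_sub_cancel] at h
    convert h using 1
    push_cast
    ring
  have hint : IntegrableOn (fun x : ℝ =>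
      ((n+1:ℝ))*x^n * Real.exp (-(1/2)*x^2) - x^(n+2) * Real.exp (-(1/2)*x^2)) (Ioi 0) := by
    have h1 := ((integrable_pow_gauss n).const_mul ((n+1:ℝ))).sub (integrable_pow_gauss (n+2))
    refine (h1.integrableOn).congr_fun ?_ measurableSet_Ioi
    intro x _
    simp only [Pi.sub_apply]
    ring
  have htend : Tendsto (fun t : ℝ => t^(n+1) * Real.exp (-(1/2)*t^2)) atTop (nhds 0) :=
    tendsto_pow_gauss_atTop (n+1)
  have h := integral_Ioi_of_hasDerivAt_of_tendsto' hd hint htend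
  rw [show (0:ℝ)^(n+1) * Real.exp (-(1/2)*(0:ℝ)^2) = 0 by simp, zero_sub] at h
  have hsplit : ∫ x in Ioi (0:ℝ),
      (((n+1:ℝ))*x^n * Real.exp (-(1/2)*x^2) - x^(n+2) * Real.exp (-(1/2)*x^2)) =
      ((n+1:ℝ)) * mI n - mI (n+2) := by
    rw [mI, mI, ← integral_const_mul,
      ← integral_sub (((integrable_pow_gauss n).integrableOn).const_mul ((n+1:ℝ)))
        ((integrable_pow_gauss (n+2)).integrableOn)]
    congr 1
    funext x
    ring
  rw [hsplit] at h
  norm_num at h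
  linarith [h]

theorem A_eq (n : ℕ) :
    ∫ t : ℝ, |t|^n * Real.exp (-(1/2)*t^2) = 2 * mI n := by
  rw [mI, ← integral_comp_abs (f := fun x => x^n * Real.exp (-(1/2)*x^2))]
  congr 1
  funext x
  simp [sq_abs]

theorem A_zero : ∫ t : ℝ, |t|^(0:ℕ) * Real.exp (-(1/2)*t^2) = Real.sqrt (2*Real.pi) := by
  simp only [pow_zero, one_mul]
  rw [show (fun t : ℝ => Real.exp (-(1/2)*t^2)) = fun t : ℝ => Real.exp (-(1/2:ℝ)*t^2) from rfl]
  rw [integral_gaussian (1/2)]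
  congr 1
  ring

theorem two_le_sqrt_two_pi : (2:ℝ) ≤ Real.sqrt (2*Real.pi) := by
  have h4 : Real.sqrt 4 ≤ Real.sqrt (2*Real.pi) :=
    Real.sqrt_le_sqrt (by nlinarith [Real.pi_gt_three])
  rw [show Real.sqrt 4 = 2 by
    rw [show (4:ℝ) = 2^2 by norm_num, Real.sqrt_sq (by norm_num : (0:ℝ) ≤ 2)]] at h4
  exact h4

theorem A_le (n : ℕ) :
    ∫ t : ℝ, |t|^n * Real.exp (-(1/2)*t^2)
      ≤ Real.sqrt (2*Real.pi) * Real.sqrt (n.factorial) := by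
  induction n using Nat.twoStepInduction with
  | zero => rw [A_zero]; simp
  | one =>
    rw [A_eq, mI_one]
    simpa using two_le_sqrt_two_pi
  | more n ih1 ih2 =>
    rw [A_eq, mI_rec, ← mul_assoc, mul_comm (2:ℝ) ((n+1:ℝ)), mul_assoc, ← A_eq n]
    have h1 : ((n+1:ℝ)) * (∫ t : ℝ, |t|^n * Real.exp (-(1/2)*t^2))
        ≤ ((n+1:ℝ)) * (Real.sqrt (2*Real.pi) * Real.sqrt (n.factorial)) :=
      mul_le_mul_of_nonneg_left ih1 (by positivity)
    refine le_trans h1 ?_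
    rw [show ((n+1:ℝ)) * (Real.sqrt (2*Real.pi) * Real.sqrt (n.factorial))
        = Real.sqrt (2*Real.pi) * (((n+1:ℝ)) * Real.sqrt (n.factorial)) by ring]
    refine mul_le_mul_of_nonneg_left ?_ (Real.sqrt_nonneg _)
    have h2 : ((n+1:ℝ)) * Real.sqrt (n.factorial) = Real.sqrt (((n+1:ℝ))^2 * n.factorial) := by
      rw [Real.sqrt_mul (by positivity), Real.sqrt_sq (by positivity)]
    rw [h2]
    refine Real.sqrt_le_sqrt ?_
    have : ((n+2).factorial : ℝ) = (n+2) * (n+1) * (n.factorial) := by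
      rw [Nat.factorial_succ, Nat.factorial_succ]
      push_cast
      ring
    rw [this]
    have hn : ((n:ℝ)+1)^2 ≤ (n+2)*(n+1) := by nlinarith [Nat.cast_nonneg (α := ℝ) n]
    push_cast
    nlinarith [Nat.cast_nonneg (α := ℝ) n, (by positivity : (0:ℝ) ≤ (n.factorial : ℝ))]

theorem abs_aeval_hermite_le (n : ℕ) (y : ℝ) :
    |aeval y (hermite n)| ≤ Real.sqrt (n.factorial) * Real.exp ((1/2)*y^2) := by
  have h1 : ‖∫ t, Fc n y t‖
      = Real.sqrt (2*Real.pi) * (|aeval y (hermite n)| * Real.exp (-(1/2)*y^2)) := by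
    rw [Rn_closed, norm_mul, norm_pow, Complex.norm_I, one_pow, one_mul,
      Complex.norm_real, Real.norm_eq_abs, abs_mul, abs_mul,
      abs_of_nonneg (Real.sqrt_nonneg _), Real.abs_exp, mul_assoc]
  have h2 : ‖∫ t, Fc n y t‖ ≤ ∫ t, ‖Fc n y t‖ := norm_integral_le_integral_norm _
  have h3 : ∫ t, ‖Fc n y t‖ = ∫ t : ℝ, |t|^n * Real.exp (-(1/2)*t^2) := by
    congr 1
    funext t
    exact norm_Fc n y t
  have h4 : Real.sqrt (2*Real.pi) * (|aeval y (hermite n)| * Real.exp (-(1/2)*y^2))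
      ≤ Real.sqrt (2*Real.pi) * Real.sqrt (n.factorial) := by
    rw [← h1]
    exact le_trans h2 (h3 ▸ A_le n)
  have hpos : (0:ℝ) < Real.sqrt (2*Real.pi) := by
    have := two_le_sqrt_two_pi
    linarith
  have h5 : |aeval y (hermite n)| * Real.exp (-(1/2)*y^2) ≤ Real.sqrt (n.factorial) :=
    le_of_mul_le_mul_left h4 hpos
  have h6 : |aeval y (hermite n)|
      = (|aeval y (hermite n)| * Real.exp (-(1/2)*y^2)) * Real.exp ((1/2)*y^2) := by
    rw [mul_assoc, ← Real.exp_add]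
    ring_nf
    simp
  rw [h6]
  exact mul_le_mul_of_nonneg_right h5 (Real.exp_pos _).le


theorem sqrt_factorial_pos (n : ℕ) : (0:ℝ) < Real.sqrt n.factorial := by
  have := Nat.factorial_pos n
  positivity

theorem factor_bound_zero (n : ℕ) :
    (∑ y ∈ (((hermite 1).map (Int.castRingHom ℝ)).roots).toFinset,
      |aeval y (hermite n)| / Real.sqrt n.factorial) ≤ 1 := by
  rw [hermite_one, Polynomial.map_X, roots_X]
  rw [show ({0} : Multiset ℝ).toFinset = {(0:ℝ)} from Multiset.toFinset_singleton 0]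
  rw [Finset.sum_singleton]
  rw [div_le_one (sqrt_factorial_pos n)]
  have h := abs_aeval_hermite_le n 0
  simpa using h

theorem aeval_eq_zero_of_mem_roots {p : ℤ[X]} (hp : p.Monic) {y : ℝ}
    (hy : y ∈ ((p.map (Int.castRingHom ℝ)).roots).toFinset) : aeval y p = 0 := by
  rw [Multiset.mem_toFinset, mem_roots'] at hy
  have h := hy.2
  rw [IsRoot, eval_map] at h
  rw [aeval_def, algebraMap_int_eq]
  exact h

theorem card_roots_le (p : ℤ[X]) (hp : p.Monic) :
    ((p.map (Int.castRingHom ℝ)).roots).toFinset.card ≤ p.natDegree := by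
  refine le_trans (Multiset.toFinset_card_le _) ?_
  refine le_trans (card_roots' _) ?_
  rw [hp.natDegree_map]

theorem factor_bound (m n : ℕ) (hm : 1 ≤ m) :
    (∑ y ∈ (((hermite (m+1)).map (Int.castRingHom ℝ)).roots).toFinset,
      |aeval y (hermite n)| / Real.sqrt n.factorial) ≤ Real.exp (5*m) := by
  have hterm : ∀ y ∈ (((hermite (m+1)).map (Int.castRingHom ℝ)).roots).toFinset,
      |aeval y (hermite n)| / Real.sqrt n.factorial ≤ Real.exp (2*(m+1)) := by
    intro y hy
    have hroot := aeval_eq_zero_of_mem_roots (hermite_monic (m+1)) hy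
    have hsq : y^2 ≤ 4*((m:ℝ)+1) := by
      have := sq_le_of_root (n := m+1) (Nat.le_add_left 1 m) hroot
      push_cast at this ⊢
      linarith
    have h1 : |aeval y (hermite n)| / Real.sqrt n.factorial ≤ Real.exp ((1/2)*y^2) := by
      rw [div_le_iff₀ (sqrt_factorial_pos n)]
      calc |aeval y (hermite n)| ≤ Real.sqrt n.factorial * Real.exp ((1/2)*y^2) :=
            abs_aeval_hermite_le n y
        _ = Real.exp ((1/2)*y^2) * Real.sqrt n.factorial := by ring
    refine le_trans h1 (Real.exp_le_exp.mpr ?_)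
    push_cast
    linarith
  have hcard : (((hermite (m+1)).map (Int.castRingHom ℝ)).roots).toFinset.card ≤ m+1 := by
    have := card_roots_le (hermite (m+1)) (hermite_monic (m+1))
    rwa [natDegree_hermite] at this
  calc (∑ y ∈ (((hermite (m+1)).map (Int.castRingHom ℝ)).roots).toFinset,
        |aeval y (hermite n)| / Real.sqrt n.factorial)
      ≤ (((hermite (m+1)).map (Int.castRingHom ℝ)).roots).toFinset.card • Real.exp (2*(m+1)) :=
        Finset.sum_le_card_nsmul _ _ _ hterm
    _ = ((((hermite (m+1)).map (Int.castRingHom ℝ)).roots).toFinset.card : ℝ)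
        * Real.exp (2*(m+1)) := by rw [nsmul_eq_mul]
    _ ≤ ((m:ℝ)+1) * Real.exp (2*(m+1)) := by
        refine mul_le_mul_of_nonneg_right ?_ (Real.exp_pos _).le
        exact_mod_cast hcard
    _ ≤ Real.exp m * Real.exp (4*m) := by
        refine mul_le_mul ?_ (Real.exp_le_exp.mpr ?_) (Real.exp_pos _).le (Real.exp_pos _).le
        · have := Real.add_one_le_exp (m : ℝ)
          linarith
        · have : (1:ℝ) ≤ m := by exact_mod_cast hm
          push_cast
          linarith
    _ = Real.exp (5*m) := by rw [← Real.exp_add]; ring_nf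

end Stmt8

/-- Lemma A.3: there is `K > 0` such that for all `s, s' ∈ 𝓕`,
`∏_{j ∈ supp s ∪ supp s'} ( ∑_{y : He_{s_j+1}(y)=0} |H_{s'_j}(y)| ) ≤ e^{K|s|₁}`,
the inner sum running over the distinct real roots of `He_{s_j+1}` and
`H_n = He_n / √(n!)` being the normalized probabilist Hermite polynomial. -/
theorem stmt_8 :
    ∃ K > (0 : ℝ), ∀ s s' : ℕ →₀ ℕ,
      (∏ j ∈ s.support ∪ s'.support,
        ∑ y ∈ (((Polynomial.hermite (s j + 1)).map (Int.castRingHom ℝ)).roots).toFinset,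
          |Polynomial.aeval y (Polynomial.hermite (s' j))| / Real.sqrt ((s' j).factorial))
      ≤ Real.exp (K * ((s.sum fun _ n => n : ℕ) : ℝ)) := by
  refine ⟨5, by norm_num, fun s s' => ?_⟩
  have hterm : ∀ j ∈ s.support ∪ s'.support,
      (∑ y ∈ (((Polynomial.hermite (s j + 1)).map (Int.castRingHom ℝ)).roots).toFinset,
        |Polynomial.aeval y (Polynomial.hermite (s' j))| / Real.sqrt ((s' j).factorial))
      ≤ Real.exp (5 * (s j : ℝ)) := by
    intro j _
    by_cases hs : s j = 0
    · rw [hs]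
      simpa using Stmt8.factor_bound_zero (s' j)
    · exact Stmt8.factor_bound (s j) (s' j) (Nat.one_le_iff_ne_zero.mpr hs)
  have hnonneg : ∀ j ∈ s.support ∪ s'.support,
      (0:ℝ) ≤ ∑ y ∈ (((Polynomial.hermite (s j + 1)).map (Int.castRingHom ℝ)).roots).toFinset,
        |Polynomial.aeval y (Polynomial.hermite (s' j))| / Real.sqrt ((s' j).factorial) := by
    intro j _
    refine Finset.sum_nonneg fun y _ => ?_
    positivity
  refine le_trans (Finset.prod_le_prod hnonneg hterm) ?_
  rw [← Real.exp_sum]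
  rw [Real.exp_le_exp]
  have hsum : (s.sum fun _ n => n) = ∑ j ∈ s.support ∪ s'.support, s j :=
    Finsupp.sum_of_support_subset s Finset.subset_union_left _ (fun i _ => rfl)
  rw [hsum, Nat.cast_sum, Finset.mul_sum]
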